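/- For a non-nilpotent δ-derivation D of a finite-dimensional perfect complex Lie algebra L, one has 1/2 ≤ |δ| ≤ 1. -/

import Mathlib

namespace DeltaBoundsAux

open Module Module.End

variable {L : Type*} [LieRing L] [LieAlgebra ℂ L]

set_option linter.unusedSectionVars false

/-- Jacobi identity in the "outer bracket" form. -/
lemma jacOuter (x y z : L) : ⁅⁅x, y⁆, z⁆ + ⁅⁅y, z⁆, x⁆ + ⁅⁅z, x⁆, y⁆ = 0 := by
  have h := lie_jacobi x y z
  have e1 : ⁅⁅x, y⁆, z⁆ = -⁅z, ⁅x, y⁆⁆ := by rw [← lie_skew]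
  have e2 : ⁅⁅y, z⁆, x⁆ = -⁅x, ⁅y, z⁆⁆ := by rw [← lie_skew]
  have e3 : ⁅⁅z, x⁆, y⁆ = -⁅y, ⁅z, x⁆⁆ := by rw [← lie_skew]
  rw [e1, e2, e3]
  have h' : ⁅z, ⁅x, y⁆⁆ + ⁅x, ⁅y, z⁆⁆ + ⁅y, ⁅z, x⁆⁆ = 0 := by rw [← h]; abel
  rw [← neg_add, ← neg_add, neg_eq_zero]; exact h'

variable (δ : ℂ) (D : Module.End ℂ L)

/-- The basic one-step identity. -/
lemma step_identity (hD : ∀ x y : L, D ⁅x, y⁆ = δ • ⁅D x, y⁆ + δ • ⁅x, D y⁆)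
    (a b : ℂ) (u v : L) :
    (D - (δ * (a + b)) • 1) ⁅u, v⁆
      = δ • ⁅(D - a • 1) u, v⁆ + δ • ⁅u, (D - b • 1) v⁆ := by
  simp only [LinearMap.sub_apply, LinearMap.smul_apply, Module.End.one_apply]
  rw [hD u v, sub_lie, lie_sub, smul_sub, smul_sub, smul_lie, lie_smul, smul_smul, smul_smul,
    mul_add, add_smul]
  abel

/-- Brackets of generalized eigenvectors: `[L_a, L_b] ⊆ L_{δ(a+b)}`. -/
lemma lie_mem_weight (hD : ∀ x y : L, D ⁅x, y⁆ = δ • ⁅D x, y⁆ + δ • ⁅x, D y⁆)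
    {a b : ℂ} {x y : L}
    (hx : x ∈ D.maxGenEigenspace a) (hy : y ∈ D.maxGenEigenspace b) :
    ⁅x, y⁆ ∈ D.maxGenEigenspace (δ * (a + b)) := by
  obtain ⟨m, hm⟩ := (D.mem_maxGenEigenspace a x).mp hx
  obtain ⟨n, hn⟩ := (D.mem_maxGenEigenspace b y).mp hy
  clear hx hy
  have absorb : ∀ w : L, (D - (δ * (a + b)) • 1) w ∈ D.maxGenEigenspace (δ * (a + b)) →
      w ∈ D.maxGenEigenspace (δ * (a + b)) := by
    intro w hw
    rw [D.mem_maxGenEigenspace] at hw ⊢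
    obtain ⟨k, hk⟩ := hw
    exact ⟨k + 1, by rw [pow_succ, Module.End.mul_apply, hk]⟩
  induction m generalizing x n y with
  | zero =>
    rw [pow_zero, Module.End.one_apply] at hm
    rw [hm, zero_lie]; exact Submodule.zero_mem _
  | succ m ih =>
    induction n generalizing y with
    | zero =>
      rw [pow_zero, Module.End.one_apply] at hn
      rw [hn, lie_zero]; exact Submodule.zero_mem _
    | succ n ihn =>
      apply absorb
      rw [step_identity δ D hD]
      have hm' : ((D - a • 1) ^ m) ((D - a • 1) x) = 0 := by
        rw [← Module.End.mul_apply, ← pow_succ]; exact hm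
      have hn' : ((D - b • 1) ^ n) ((D - b • 1) y) = 0 := by
        rw [← Module.End.mul_apply, ← pow_succ]; exact hn
      refine Submodule.add_mem _ (Submodule.smul_mem _ _ ?_) (Submodule.smul_mem _ _ ?_)
      · exact ih hm' (n + 1) hn
      · exact ihn hn'

/-- `D` preserves its generalized eigenspaces. -/
lemma D_mem_weight {a : ℂ} {x : L} (hx : x ∈ D.maxGenEigenspace a) :
    D x ∈ D.maxGenEigenspace a := by
  obtain ⟨k, hk⟩ := (D.mem_maxGenEigenspace a x).mp hx
  refine (D.mem_maxGenEigenspace a (D x)).mpr ⟨k, ?_⟩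
  have hcomm : (D - a • 1) ^ k * D = D * (D - a • 1) ^ k := by
    refine Commute.pow_left ?_ k
    exact (Commute.refl D).sub_left ((Commute.one_left D).smul_left a)
  calc ((D - a • 1) ^ k) (D x) = ((D - a • 1) ^ k * D) x := rfl
    _ = (D * (D - a • 1) ^ k) x := by rw [hcomm]
    _ = D (((D - a • 1) ^ k) x) := rfl
    _ = 0 := by rw [hk, map_zero]

/-- Filippov's identity (★) for δ-derivations with `δ ∉ {0,1}`. -/
lemma star_identity (hD : ∀ x y : L, D ⁅x, y⁆ = δ • ⁅D x, y⁆ + δ • ⁅x, D y⁆)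
    (hne : δ - δ * δ ≠ 0) (x y z : L) :
    ⁅⁅y, z⁆, D x⁆ + ⁅⁅z, x⁆, D y⁆ + ⁅⁅x, y⁆, D z⁆ = 0 := by
  have key : ∀ x y z : L, D ⁅⁅x, y⁆, z⁆
      = (δ * δ) • ⁅⁅D x, y⁆, z⁆ + (δ * δ) • ⁅⁅x, D y⁆, z⁆ + δ • ⁅⁅x, y⁆, D z⁆ := by
    intro x y z
    calc D ⁅⁅x, y⁆, z⁆ = δ • ⁅D ⁅x, y⁆, z⁆ + δ • ⁅⁅x, y⁆, D z⁆ := hD _ z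
      _ = δ • ⁅δ • ⁅D x, y⁆ + δ • ⁅x, D y⁆, z⁆ + δ • ⁅⁅x, y⁆, D z⁆ := by rw [hD x y]
      _ = (δ * δ) • ⁅⁅D x, y⁆, z⁆ + (δ * δ) • ⁅⁅x, D y⁆, z⁆ + δ • ⁅⁅x, y⁆, D z⁆ := by
          rw [add_lie, smul_lie, smul_lie, smul_add, smul_smul, smul_smul, add_assoc]
  have e : D ⁅⁅x, y⁆, z⁆ + D ⁅⁅y, z⁆, x⁆ + D ⁅⁅z, x⁆, y⁆ = 0 := by
    rw [← map_add, ← map_add, jacOuter, map_zero]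
  rw [key x y z, key y z x, key z x y] at e
  have j1 : ⁅⁅D x, y⁆, z⁆ + ⁅⁅z, D x⁆, y⁆ = -⁅⁅y, z⁆, D x⁆ := by
    have h := jacOuter (D x) y z
    have h' : (⁅⁅D x, y⁆, z⁆ + ⁅⁅z, D x⁆, y⁆) + ⁅⁅y, z⁆, D x⁆ = 0 := by rw [← h]; abel
    exact eq_neg_of_add_eq_zero_left h'
  have j2 : ⁅⁅D y, z⁆, x⁆ + ⁅⁅x, D y⁆, z⁆ = -⁅⁅z, x⁆, D y⁆ := by
    have h := jacOuter (D y) z x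
    have h' : (⁅⁅D y, z⁆, x⁆ + ⁅⁅x, D y⁆, z⁆) + ⁅⁅z, x⁆, D y⁆ = 0 := by rw [← h]; abel
    exact eq_neg_of_add_eq_zero_left h'
  have j3 : ⁅⁅D z, x⁆, y⁆ + ⁅⁅y, D z⁆, x⁆ = -⁅⁅x, y⁆, D z⁆ := by
    have h := jacOuter (D z) x y
    have h' : (⁅⁅D z, x⁆, y⁆ + ⁅⁅y, D z⁆, x⁆) + ⁅⁅x, y⁆, D z⁆ = 0 := by rw [← h]; abel
    exact eq_neg_of_add_eq_zero_left h'
  have e2 : (δ * δ) • ((⁅⁅D x, y⁆, z⁆ + ⁅⁅z, D x⁆, y⁆) + ((⁅⁅D y, z⁆, x⁆ + ⁅⁅x, D y⁆, z⁆)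
        + (⁅⁅D z, x⁆, y⁆ + ⁅⁅y, D z⁆, x⁆)))
      + δ • (⁅⁅y, z⁆, D x⁆ + ⁅⁅z, x⁆, D y⁆ + ⁅⁅x, y⁆, D z⁆) = 0 := by
    rw [← e]; simp only [smul_add]; abel
  rw [j1, j2, j3] at e2
  have hneg : (-⁅⁅y, z⁆, D x⁆ + (-⁅⁅z, x⁆, D y⁆ + -⁅⁅x, y⁆, D z⁆))
      = -(⁅⁅y, z⁆, D x⁆ + ⁅⁅z, x⁆, D y⁆ + ⁅⁅x, y⁆, D z⁆) := by abel
  rw [hneg, smul_neg] at e2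
  have e3 : (δ - δ * δ) • (⁅⁅y, z⁆, D x⁆ + ⁅⁅z, x⁆, D y⁆ + ⁅⁅x, y⁆, D z⁆) = 0 := by
    rw [sub_smul, sub_eq_zero]
    exact (neg_add_eq_zero.mp e2).symm
  rcases smul_eq_zero.mp e3 with h | h
  · exact absurd h hne
  · exact h

section FinDim

variable [FiniteDimensional ℂ L]

lemma hasEigenvalue_of_maxGen_ne_bot {w : ℂ} (h : D.maxGenEigenspace w ≠ ⊥) :
    D.HasEigenvalue w := by
  rw [D.maxGenEigenspace_eq_genEigenspace_finrank] at h
  exact Module.End.hasEigenvalue_of_hasGenEigenvalue (k := Module.finrank ℂ L) h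

/-- The triple rule: `[[L_p, L_q], L_a] = 0` when `a ∉ {0, p, q}`. -/
lemma triple_rule (hD : ∀ x y : L, D ⁅x, y⁆ = δ • ⁅D x, y⁆ + δ • ⁅x, D y⁆)
    (hδ0 : δ ≠ 0) (hδ1 : δ ≠ 1) {p q a : ℂ}
    (ha0 : a ≠ 0) (hpa : p ≠ a) (hqa : q ≠ a) {u v x : L}
    (hu : u ∈ D.maxGenEigenspace p) (hv : v ∈ D.maxGenEigenspace q)
    (hx : x ∈ D.maxGenEigenspace a) : ⁅⁅u, v⁆, x⁆ = 0 := by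
  have hδ1' : δ - 1 ≠ 0 := sub_ne_zero.mpr hδ1
  have hne : δ - δ * δ ≠ 0 := by
    intro h
    have h2 : δ * (1 - δ) = 0 := by linear_combination h
    rcases mul_eq_zero.mp h2 with h' | h'
    · exact hδ0 h'
    · exact hδ1 (by linear_combination -h')
  -- step 1 : brackets with D x vanish
  have step1 : ∀ x' ∈ D.maxGenEigenspace a, ⁅⁅u, v⁆, D x'⁆ = 0 := by
    intro x' hx'
    have hstar := star_identity δ D hD hne x' u v
    set w1 : ℂ := δ * (δ * (p + q) + a) with hw1
    set w2 : ℂ := δ * (δ * (q + a) + p) with hw2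
    set w3 : ℂ := δ * (δ * (a + p) + q) with hw3
    have hT1 : ⁅⁅u, v⁆, D x'⁆ ∈ D.maxGenEigenspace w1 :=
      lie_mem_weight δ D hD (lie_mem_weight δ D hD hu hv) (D_mem_weight D hx')
    have hT2 : ⁅⁅v, x'⁆, D u⁆ ∈ D.maxGenEigenspace w2 :=
      lie_mem_weight δ D hD (lie_mem_weight δ D hD hv hx') (D_mem_weight D hu)
    have hT3 : ⁅⁅x', u⁆, D v⁆ ∈ D.maxGenEigenspace w3 :=
      lie_mem_weight δ D hD (lie_mem_weight δ D hD hx' hu) (D_mem_weight D hv)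
    have hw21 : w2 ≠ w1 := by
      intro h
      have key : δ * (δ - 1) * (a - p) = 0 := by rw [hw1, hw2] at h; linear_combination h
      rcases mul_eq_zero.mp key with h' | h'
      · rcases mul_eq_zero.mp h' with h'' | h''
        · exact hδ0 h''
        · exact hδ1' h''
      · exact hpa (by linear_combination -h')
    have hw31 : w3 ≠ w1 := by
      intro h
      have key : δ * (δ - 1) * (a - q) = 0 := by rw [hw1, hw3] at h; linear_combination h
      rcases mul_eq_zero.mp key with h' | h'
      · rcases mul_eq_zero.mp h' with h'' | h''
        · exact hδ0 h''
        · exact hδ1' h''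
      · exact hqa (by linear_combination -h')
    have hmem2 : ⁅⁅v, x'⁆, D u⁆ + ⁅⁅x', u⁆, D v⁆
        ∈ ⨆ (w) (_ : w ≠ w1), D.maxGenEigenspace w := by
      refine Submodule.add_mem _ ?_ ?_
      · exact Submodule.mem_iSup_of_mem w2 (Submodule.mem_iSup_of_mem hw21 hT2)
      · exact Submodule.mem_iSup_of_mem w3 (Submodule.mem_iSup_of_mem hw31 hT3)
    have heq : ⁅⁅u, v⁆, D x'⁆ = -(⁅⁅v, x'⁆, D u⁆ + ⁅⁅x', u⁆, D v⁆) := by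
      have h' : ⁅⁅u, v⁆, D x'⁆ + (⁅⁅v, x'⁆, D u⁆ + ⁅⁅x', u⁆, D v⁆) = 0 := by
        rw [← hstar]; abel
      exact eq_neg_of_add_eq_zero_left h'
    have hdisj := iSupIndep_def.mp D.independent_maxGenEigenspace w1
    have hmem1 : ⁅⁅u, v⁆, D x'⁆ ∈ ⨆ (w) (_ : w ≠ w1), D.maxGenEigenspace w := by
      rw [heq]; exact Submodule.neg_mem _ hmem2
    exact Submodule.disjoint_def.mp hdisj _ hT1 hmem1
  -- step 2 : D is surjective on `maxGenEigenspace a`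
  have hmapsTo : ∀ y ∈ D.maxGenEigenspace a, D y ∈ D.maxGenEigenspace a :=
    fun y hy => D_mem_weight D hy
  set Dr := D.restrict hmapsTo with hDr
  have hinj : Function.Injective Dr := by
    intro m1 m2 h
    have h0 : D ((m1 : L) - (m2 : L)) = 0 := by
      have hval : (Dr m1 : L) = (Dr m2 : L) := by rw [h]
      simp only [hDr, LinearMap.restrict_apply] at hval
      rw [map_sub, hval, sub_self]
    have hmem0 : ((m1 : L) - (m2 : L)) ∈ D.maxGenEigenspace 0 := by
      refine (D.mem_maxGenEigenspace 0 _).mpr ⟨1, ?_⟩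
      simpa using h0
    have hmema : ((m1 : L) - (m2 : L)) ∈ D.maxGenEigenspace a :=
      Submodule.sub_mem _ m1.2 m2.2
    have hdisj := iSupIndep_def.mp D.independent_maxGenEigenspace a
    have hz : ((m1 : L) - (m2 : L)) = 0 := by
      refine Submodule.disjoint_def.mp hdisj _ hmema ?_
      exact Submodule.mem_iSup_of_mem 0 (Submodule.mem_iSup_of_mem (Ne.symm ha0) hmem0)
    exact Subtype.ext (sub_eq_zero.mp hz)
  have hsurj : Function.Surjective Dr := LinearMap.injective_iff_surjective.mp hinj
  obtain ⟨x', hDx'⟩ := hsurj ⟨x, hx⟩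
  have hxval : D (x' : L) = x := by
    have hval := congrArg Subtype.val hDx'
    simpa [hDr, LinearMap.restrict_apply] using hval
  rw [← hxval]
  exact step1 x' x'.2

/-- The span of brackets of weight vectors with weight-sum data equal to `w`. -/
def NW (w : ℂ) : Submodule ℂ L :=
  Submodule.span ℂ {m | ∃ p q, ∃ u ∈ D.maxGenEigenspace p, ∃ v ∈ D.maxGenEigenspace q,
    δ * (p + q) = w ∧ ⁅u, v⁆ = m}

lemma NW_le (hD : ∀ x y : L, D ⁅x, y⁆ = δ • ⁅D x, y⁆ + δ • ⁅x, D y⁆) (w : ℂ) :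
    NW δ D w ≤ D.maxGenEigenspace w := by
  rw [NW, Submodule.span_le]
  rintro m ⟨p, q, u, hu, v, hv, hpq, rfl⟩
  rw [← hpq]
  exact lie_mem_weight δ D hD hu hv

lemma iSup_NW (hperf : ⁅(⊤ : LieIdeal ℂ L), (⊤ : LieIdeal ℂ L)⁆ = ⊤) :
    ⨆ w, NW δ D w = ⊤ := by
  have hbr : ∀ x y : L, ⁅x, y⁆ ∈ ⨆ w, NW δ D w := by
    intro x y
    have hx : x ∈ ⨆ w, D.maxGenEigenspace w := by
      rw [D.iSup_maxGenEigenspace_eq_top]; trivial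
    refine Submodule.iSup_induction (motive := fun x => ∀ y : L, ⁅x, y⁆ ∈ ⨆ w, NW δ D w)
      _ hx ?_ ?_ ?_ y
    · intro p x hxp y
      have hy : y ∈ ⨆ w, D.maxGenEigenspace w := by
        rw [D.iSup_maxGenEigenspace_eq_top]; trivial
      refine Submodule.iSup_induction (motive := fun y => ⁅x, y⁆ ∈ ⨆ w, NW δ D w) _ hy ?_ ?_ ?_
      · intro q y hyq
        refine Submodule.mem_iSup_of_mem (δ * (p + q)) ?_
        exact Submodule.subset_span ⟨p, q, x, hxp, y, hyq, rfl, rfl⟩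
      · show ⁅x, (0 : L)⁆ ∈ ⨆ w, NW δ D w
        rw [lie_zero]; exact Submodule.zero_mem _
      · intro y1 y2 h1 h2
        show ⁅x, y1 + y2⁆ ∈ ⨆ w, NW δ D w
        rw [lie_add]; exact Submodule.add_mem _ h1 h2
    · intro y
      show ⁅(0 : L), y⁆ ∈ ⨆ w, NW δ D w
      rw [zero_lie]; exact Submodule.zero_mem _
    · intro x1 x2 h1 h2 y
      show ⁅x1 + x2, y⁆ ∈ ⨆ w, NW δ D w
      rw [add_lie]; exact Submodule.add_mem _ (h1 y) (h2 y)
  have h1 : (⊤ : Submodule ℂ L)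
      = Submodule.span ℂ {m | ∃ x ∈ (⊤ : LieIdeal ℂ L), ∃ n ∈ (⊤ : LieIdeal ℂ L), ⁅x, n⁆ = m} := by
    rw [← LieSubmodule.lieIdeal_oper_eq_linear_span', hperf]
    rfl
  rw [eq_top_iff, h1, Submodule.span_le]
  rintro m ⟨x, -, y, -, rfl⟩
  exact hbr x y

lemma weight_le_NW (hD : ∀ x y : L, D ⁅x, y⁆ = δ • ⁅D x, y⁆ + δ • ⁅x, D y⁆)
    (hperf : ⁅(⊤ : LieIdeal ℂ L), (⊤ : LieIdeal ℂ L)⁆ = ⊤) (b : ℂ) :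
    D.maxGenEigenspace b ≤ NW δ D b := by
  intro x hx
  have hx' : x ∈ ⨆ w, NW δ D w := by rw [iSup_NW δ D hperf]; trivial
  rw [Submodule.mem_iSup_iff_exists_finsupp] at hx'
  obtain ⟨f, hf, hsum⟩ := hx'
  have hrest : x - f b ∈ ⨆ (w) (_ : w ≠ b), D.maxGenEigenspace w := by
    have hxf : x - f b = ∑ w ∈ f.support.erase b, f w := by
      by_cases hb : b ∈ f.support
      · have hsplit := Finset.add_sum_erase f.support (fun w => f w) hb
        rw [Finsupp.sum] at hsum
        rw [← hsum, ← hsplit]; abel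
      · have hfb : f b = 0 := Finsupp.notMem_support_iff.mp hb
        rw [hfb, sub_zero, ← hsum, Finsupp.sum, Finset.erase_eq_of_notMem hb]
    rw [hxf]
    refine Submodule.sum_mem _ ?_
    intro w hw
    have hwb : w ≠ b := Finset.ne_of_mem_erase hw
    exact Submodule.mem_iSup_of_mem w (Submodule.mem_iSup_of_mem hwb (NW_le δ D hD w (hf w)))
  have hEb : x - f b ∈ D.maxGenEigenspace b :=
    Submodule.sub_mem _ hx (NW_le δ D hD b (hf b))
  have hdisj := iSupIndep_def.mp D.independent_maxGenEigenspace b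
  have h0 : x - f b = 0 := Submodule.disjoint_def.mp hdisj _ hEb hrest
  have hxfb : x = f b := by rw [← sub_eq_zero]; exact h0
  rw [hxfb]; exact hf b

/-- The pairing relation: nonzero brackets between weight spaces. -/
def Pa (a b : ℂ) : Prop :=
  ∃ u v : L, u ∈ D.maxGenEigenspace a ∧ v ∈ D.maxGenEigenspace b ∧ ⁅u, v⁆ ≠ 0

lemma Pa.swap {a b : ℂ} (h : Pa D a b) : Pa D b a := by
  obtain ⟨u, v, hu, hv, hne⟩ := h
  refine ⟨v, u, hv, hu, fun h0 => hne ?_⟩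
  rw [← lie_skew, h0, neg_zero]

lemma Pa.closure (hD : ∀ x y : L, D ⁅x, y⁆ = δ • ⁅D x, y⁆ + δ • ⁅x, D y⁆)
    (hperf : ⁅(⊤ : LieIdeal ℂ L), (⊤ : LieIdeal ℂ L)⁆ = ⊤)
    (hδ0 : δ ≠ 0) (hδ1 : δ ≠ 1) {a b : ℂ} (h : Pa D a b) (ha : a ≠ 0) :
    Pa D a (b / δ - a) := by
  obtain ⟨u, v, hu, hv, hne⟩ := h
  by_contra hcon
  apply hne
  have hvN : v ∈ NW δ D b := weight_le_NW δ D hD hperf b hv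
  rw [NW] at hvN
  refine Submodule.span_induction (p := fun m _ => ⁅u, m⁆ = 0) ?_ ?_ ?_ ?_ hvN
  · rintro m ⟨p, q, u', hu', v', hv', hpq, rfl⟩
    by_cases h0 : ⁅u', v'⁆ = 0
    · rw [h0, lie_zero]
    have hq : q = b / δ - p := by field_simp; linear_combination hpq
    by_cases hpa : p = a
    · exact absurd ⟨u', v', hpa ▸ hu',
        (by rw [show b / δ - a = q from by rw [hq, hpa]]; exact hv'), h0⟩ hcon
    by_cases hqa : q = a
    · have hp : p = b / δ - a := by rw [← hqa]; linear_combination hq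
      exact absurd ⟨v', u', hqa ▸ hv', hp ▸ hu',
        fun hz => h0 (by rw [← neg_eq_zero, lie_skew]; exact hz)⟩ hcon
    · have htr := triple_rule δ D hD hδ0 hδ1 ha hpa hqa hu' hv' hu
      rw [← lie_skew, htr, neg_zero]
  · show ⁅u, (0 : L)⁆ = 0
    rw [lie_zero]
  · intro m1 m2 _ _ h1 h2
    show ⁅u, m1 + m2⁆ = 0
    rw [lie_add, h1, h2, add_zero]
  · intro c m _ hm
    show ⁅u, c • m⁆ = 0
    rw [lie_smul, hm, smul_zero]

end FinDim

end DeltaBoundsAux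

/-- For a non-nilpotent δ-derivation of a finite-dimensional perfect complex
Lie algebra, `1/2 ≤ |δ| ≤ 1`. -/
theorem delta_bounds_of_non_nilpotent (L : Type*) [LieRing L] [LieAlgebra ℂ L]
    [FiniteDimensional ℂ L]
    (hperf : ⁅(⊤ : LieIdeal ℂ L), (⊤ : LieIdeal ℂ L)⁆ = ⊤)
    (δ : ℂ) (D : Module.End ℂ L)
    (hD : ∀ x y : L, D ⁅x, y⁆ = δ • ⁅D x, y⁆ + δ • ⁅x, D y⁆)
    (hnil : ¬ IsNilpotent D) :
    1 / 2 ≤ ‖δ‖ ∧ ‖δ‖ ≤ 1 := by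
  classical
  open DeltaBoundsAux in
  -- a nonzero generalized eigenvalue exists
  have hex : ∃ c : ℂ, c ≠ 0 ∧ D.maxGenEigenspace c ≠ ⊥ := by
    by_contra hno
    push_neg at hno
    apply hnil
    have htop : (⊤ : Submodule ℂ L) ≤ D.maxGenEigenspace 0 := by
      rw [← Module.End.iSup_maxGenEigenspace_eq_top D]
      refine iSup_le fun w => ?_
      by_cases hw : w = 0
      · rw [hw]
      · rw [hno w hw]; exact bot_le
    refine ⟨Module.finrank ℂ L, ?_⟩
    ext x
    have hx := htop (Submodule.mem_top (x := x))
    rw [D.maxGenEigenspace_eq_genEigenspace_finrank, Module.End.mem_genEigenspace_nat] at hx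
    simp only [zero_smul, sub_zero] at hx
    simpa using hx
  -- generators of nonzero weight spaces
  have hgen : ∀ c : ℂ, D.maxGenEigenspace c ≠ ⊥ →
      ∃ p q, ∃ u v : L, u ∈ D.maxGenEigenspace p ∧ v ∈ D.maxGenEigenspace q ∧
        δ * (p + q) = c ∧ ⁅u, v⁆ ≠ 0 := by
    intro c hc
    by_contra hno
    push_neg at hno
    apply hc
    rw [eq_bot_iff]
    intro x hx
    have hxN := weight_le_NW δ D hD hperf c hx
    have hle : NW δ D c ≤ ⊥ := by
      rw [NW, Submodule.span_le]
      rintro m ⟨p, q, u, hu, v, hv, hpq, rfl⟩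
      simp [hno p q u v hu hv hpq]
    exact hle hxN
  have hfin : Set.Finite {w : ℂ | D.maxGenEigenspace w ≠ ⊥} :=
    Set.Finite.subset D.finite_hasEigenvalue
      (fun w hw => hasEigenvalue_of_maxGen_ne_bot D hw)
  -- lower bound
  have hlow : 1 / 2 ≤ ‖δ‖ := by
    obtain ⟨c0, hc0, hc0ne⟩ := hex
    set S : Set ℂ := {w : ℂ | w ≠ 0 ∧ D.maxGenEigenspace w ≠ ⊥} with hS
    have hSfin : S.Finite := hfin.subset (fun w hw => hw.2)
    obtain ⟨γ, hγS, hγmax⟩ := Set.exists_max_image S (fun w : ℂ => ‖w‖) hSfin ⟨c0, hc0, hc0ne⟩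
    obtain ⟨p, q, u, v, hu, hv, hpq, hbne⟩ := hgen γ hγS.2
    have hu0 : u ≠ 0 := fun h => hbne (by rw [h, zero_lie])
    have hv0 : v ≠ 0 := fun h => hbne (by rw [h, lie_zero])
    have hple : ‖p‖ ≤ ‖γ‖ := by
      by_cases hp : p = 0
      · rw [hp]; simpa using norm_nonneg γ
      · refine hγmax p ⟨hp, fun hb => hu0 ?_⟩
        rw [hb] at hu; simpa using hu
    have hqle : ‖q‖ ≤ ‖γ‖ := by
      by_cases hqz : q = 0
      · rw [hqz]; simpa using norm_nonneg γ
      · refine hγmax q ⟨hqz, fun hb => hv0 ?_⟩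
        rw [hb] at hv; simpa using hv
    have hγpos : 0 < ‖γ‖ := norm_pos_iff.mpr hγS.1
    have habs : ‖γ‖ ≤ ‖δ‖ * (‖p‖ + ‖q‖) := by
      rw [← hpq, norm_mul]
      exact mul_le_mul_of_nonneg_left (norm_add_le p q) (norm_nonneg δ)
    nlinarith [norm_nonneg δ,
      mul_le_mul_of_nonneg_left (add_le_add hple hqle) (norm_nonneg δ)]
  refine ⟨hlow, ?_⟩
  -- upper bound
  by_contra hgt
  push_neg at hgt
  have hδ0 : δ ≠ 0 := by
    rintro rfl; rw [norm_zero] at hgt; linarith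
  have hδ1 : δ ≠ 1 := by
    rintro rfl; rw [norm_one] at hgt; exact lt_irrefl 1 hgt
  have hδ1' : δ - 1 ≠ 0 := sub_ne_zero.mpr hδ1
  -- rigidity of pairings
  have hfix : ∀ a b : ℂ, Pa D a b → a ≠ 0 → b = -a * δ / (δ - 1) := by
    intro a b hPab ha
    by_contra hneq
    set T : ℂ → ℂ := fun c => c / δ - a with hT
    set seq : ℕ → ℂ := fun k => T^[k] b with hseq
    have hseq_succ : ∀ k, seq (k + 1) = (seq k) / δ - a := by
      intro k
      rw [hseq]
      simp only [Function.iterate_succ_apply']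
      rfl
    have hPall : ∀ k, Pa D a (seq k) := by
      intro k
      induction k with
      | zero => simpa [hseq] using hPab
      | succ k ih =>
        rw [hseq_succ]
        exact Pa.closure δ D hD hperf hδ0 hδ1 ih ha
    set β : ℂ := -a * δ / (δ - 1) with hβ
    have hβeq : δ * β + δ * a = β := by
      rw [hβ]; field_simp; ring
    have hgeom : ∀ k, δ ^ k * (seq k - β) = b - β := by
      intro k
      induction k with
      | zero => simp [hseq]
      | succ k ih =>
        rw [hseq_succ, pow_succ]
        calc δ ^ k * δ * (seq k / δ - a - β)
            = δ ^ k * (seq k - (δ * β + δ * a)) := by field_simp; ring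
          _ = δ ^ k * (seq k - β) := by rw [hβeq]
          _ = b - β := ih
    have hbβ : b - β ≠ 0 := sub_ne_zero.mpr hneq
    have hinj : Function.Injective seq := by
      intro i j hij
      have hsiβ : seq i - β ≠ 0 := by
        intro h
        have := hgeom i
        rw [h, mul_zero] at this
        exact hbβ this.symm
      have hpow : δ ^ i = δ ^ j := by
        have h1 := hgeom i
        rw [hij] at h1
        refine mul_right_cancel₀ ?_ (h1.trans (hgeom j).symm)
        rw [← hij]
        exact hsiβ
      have habs : ‖δ‖ ^ i = ‖δ‖ ^ j := by
        rw [← norm_pow, hpow, norm_pow]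
      rcases lt_trichotomy i j with h | h | h
      · exact absurd habs (ne_of_lt (pow_lt_pow_right₀ hgt h))
      · exact h
      · exact absurd habs.symm (ne_of_lt (pow_lt_pow_right₀ hgt h))
    have hmem : ∀ k, seq k ∈ {w : ℂ | D.maxGenEigenspace w ≠ ⊥} := by
      intro k
      obtain ⟨u, v, hu, hv, hne⟩ := hPall k
      have hv0 : v ≠ 0 := fun h => hne (by rw [h, lie_zero])
      intro hbot
      rw [hbot] at hv
      exact hv0 (by simpa using hv)
    exact Set.not_infinite.mpr hfin (Set.infinite_of_injective_forall_mem hinj hmem)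
  -- final algebra
  obtain ⟨c0, hc0, hc0ne⟩ := hex
  obtain ⟨p, q, u, v, hu, hv, hpq, hbne⟩ := hgen c0 hc0ne
  have hPpq : Pa D p q := ⟨u, v, hu, hv, hbne⟩
  have hp0 : p ≠ 0 := by
    rintro rfl
    have hq0 : q ≠ 0 := by
      rintro rfl
      rw [add_zero, mul_zero] at hpq
      exact hc0 hpq.symm
    have h0 := hfix q 0 hPpq.swap hq0
    have hqδ : -q * δ = 0 := by
      have h0' := h0.symm
      rw [div_eq_iff hδ1'] at h0'
      simpa using h0'
    rcases mul_eq_zero.mp hqδ with h | h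
    · exact hq0 (neg_eq_zero.mp h)
    · exact hδ0 h
  have hq' : q = -p * δ / (δ - 1) := hfix p q hPpq hp0
  have hq0 : q ≠ 0 := by
    rw [hq']
    intro h
    rcases div_eq_zero_iff.mp h with h' | h'
    · rcases mul_eq_zero.mp h' with h'' | h''
      · exact hp0 (neg_eq_zero.mp h'')
      · exact hδ0 h''
    · exact hδ1' h'
  have hp' : p = -q * δ / (δ - 1) := hfix q p hPpq.swap hq0
  have hkey : p * (2 * δ - 1) = 0 := by
    rw [hq'] at hp'
    field_simp [hδ1'] at hp'
    linear_combination (-p) * hp'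
  rcases mul_eq_zero.mp hkey with h | h
  · exact hp0 h
  · have hδval : δ = 1 / 2 := by linear_combination h / 2
    rw [hδval] at hgt
    rw [norm_div, norm_one] at hgt
    have : ‖(2 : ℂ)‖ = 2 := by
      rw [show (2 : ℂ) = ((2 : ℝ) : ℂ) by norm_num, Complex.norm_real]
      norm_num
    rw [this] at hgt
    norm_num at hgt
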